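/- Let h be analytic and z ∈ ℂ with h(z) ≠ 0. Define γ(h,z) = sup_{k ≥ 1} |h^{(k)}(z)/(k! h(z))|^{1/k}. If w ∈ ℂ satisfies 4|z−w|·γ(h,z) ≤ 1, then γ(h,w) ≤ 4·γ(h,z). -/

import Mathlib

open Complex Metric

def gammaSet (h : ℂ → ℂ) (z : ℂ) : Set ℝ :=
  {x | ∃ k : ℕ, 1 ≤ k ∧ x = ‖iteratedDeriv k h z / ((k.factorial : ℂ) * h z)‖ ^ ((1 : ℝ) / k)}

/-- Upper bound on `‖iteratedDeriv k h w‖` from coefficient bounds at `z`. -/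
lemma gamma_deriv_bound (h : ℂ → ℂ) (z w : ℂ) (hdiff : Differentiable ℂ h) {γz : ℝ}
    (hγ0 : 0 ≤ γz)
    (hcoef : ∀ n : ℕ, ‖iteratedDeriv n h z‖ ≤ n.factorial * ‖h z‖ * γz ^ n)
    (hu1 : ‖z - w‖ * γz < 1) (k : ℕ) :
    ‖iteratedDeriv k h w‖ ≤
      1 / (1 - ‖z - w‖ * γz) ^ (k + 1) * (k.factorial * ‖h z‖ * γz ^ k) := by
  set d : ℝ := ‖z - w‖ with hd
  set u : ℝ := d * γz with hudef
  have hd0 : 0 ≤ d := norm_nonneg _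
  have hu0 : 0 ≤ u := mul_nonneg hd0 hγ0
  have hA : AnalyticOnNhd ℂ h Set.univ := analyticOnNhd_univ_iff_differentiable.mpr hdiff
  have hg : Differentiable ℂ (iteratedDeriv k h) := by
    rw [iteratedDeriv_eq_iterate]
    exact analyticOnNhd_univ_iff_differentiable.mp (hA.iterated_deriv k)
  have hsum := Complex.hasSum_taylorSeries_of_entire hg z w
  have key : ∀ j : ℕ, iteratedDeriv j (iteratedDeriv k h) z = iteratedDeriv (j + k) h z := by
    intro j
    simp only [iteratedDeriv_eq_iterate]
    rw [Function.iterate_add_apply]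
  have hu' : ‖u‖ < 1 := by rwa [Real.norm_eq_abs, _root_.abs_of_nonneg hu0]
  have hbsum : HasSum (fun j : ℕ => ((j + k).choose k * u ^ j) * (k.factorial * ‖h z‖ * γz ^ k))
      (1 / (1 - u) ^ (k + 1) * (k.factorial * ‖h z‖ * γz ^ k)) :=
    (hasSum_choose_mul_geometric_of_norm_lt_one k hu').mul_right _
  rw [← hsum.tsum_eq]
  refine tsum_of_norm_bounded hbsum ?_
  intro j
  rw [key j]
  have h1 : ‖(j.factorial : ℂ)⁻¹ • (w - z) ^ j • iteratedDeriv (j + k) h z‖ =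
      (j.factorial : ℝ)⁻¹ * (d ^ j * ‖iteratedDeriv (j + k) h z‖) := by
    rw [norm_smul, norm_smul, norm_inv, norm_pow]
    simp [hd, norm_sub_rev z w]
  rw [h1]
  have h2 : ‖iteratedDeriv (j + k) h z‖ ≤ (j + k).factorial * ‖h z‖ * γz ^ (j + k) :=
    hcoef (j + k)
  have hfact : ((j + k).factorial : ℝ) = (j + k).choose k * k.factorial * j.factorial := by
    have := Nat.choose_mul_factorial_mul_factorial (Nat.le_add_left k j)
    rw [Nat.add_sub_cancel] at this
    exact_mod_cast congrArg (fun n : ℕ => (n : ℝ)) this.symm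
  have hjf : (0 : ℝ) < (j.factorial : ℝ) := by exact_mod_cast j.factorial_pos
  calc (j.factorial : ℝ)⁻¹ * (d ^ j * ‖iteratedDeriv (j + k) h z‖)
      ≤ (j.factorial : ℝ)⁻¹ * (d ^ j * ((j + k).factorial * ‖h z‖ * γz ^ (j + k))) := by
        gcongr
    _ = ((j + k).choose k * u ^ j) * (k.factorial * ‖h z‖ * γz ^ k) := by
        rw [hfact]
        field_simp [hudef, mul_pow]
        rw [hudef, mul_pow]; ring

/-- Lower bound on `‖h w‖`. -/
lemma gamma_hw_lower (h : ℂ → ℂ) (z w : ℂ) (hdiff : Differentiable ℂ h) {γz : ℝ}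
    (hγ0 : 0 ≤ γz)
    (hcoef : ∀ n : ℕ, ‖iteratedDeriv n h z‖ ≤ n.factorial * ‖h z‖ * γz ^ n)
    (hu1 : ‖z - w‖ * γz < 1) :
    ‖h z‖ - ‖h z‖ * (‖z - w‖ * γz) * (1 - ‖z - w‖ * γz)⁻¹ ≤ ‖h w‖ := by
  set d : ℝ := ‖z - w‖ with hd
  set u : ℝ := d * γz with hudef
  have hd0 : 0 ≤ d := norm_nonneg _
  have hu0 : 0 ≤ u := mul_nonneg hd0 hγ0
  have hsum := Complex.hasSum_taylorSeries_of_entire hdiff z w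
  have hshift := (hasSum_nat_add_iff' 1).mpr hsum
  simp only [Finset.range_one, Finset.sum_singleton, Nat.factorial_zero, Nat.cast_one,
    inv_one, one_smul, pow_zero, iteratedDeriv_zero] at hshift
  have hgeom : HasSum (fun j : ℕ => (‖h z‖ * u) * u ^ j) (‖h z‖ * u * (1 - u)⁻¹) :=
    (hasSum_geometric_of_lt_one hu0 hu1).mul_left _
  have hdist : ‖h w - h z‖ ≤ ‖h z‖ * u * (1 - u)⁻¹ := by
    rw [← hshift.tsum_eq]
    refine tsum_of_norm_bounded hgeom ?_
    intro j
    have h1 : ‖((j + 1).factorial : ℂ)⁻¹ • (w - z) ^ (j + 1) • iteratedDeriv (j + 1) h z‖ =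
        ((j + 1).factorial : ℝ)⁻¹ * (d ^ (j + 1) * ‖iteratedDeriv (j + 1) h z‖) := by
      rw [norm_smul, norm_smul, norm_inv, norm_pow]
      simp [hd, norm_sub_rev z w]
    rw [h1]
    have h2 := hcoef (j + 1)
    have hjf : (0 : ℝ) < ((j + 1).factorial : ℝ) := by exact_mod_cast (j + 1).factorial_pos
    calc ((j + 1).factorial : ℝ)⁻¹ * (d ^ (j + 1) * ‖iteratedDeriv (j + 1) h z‖)
        ≤ ((j + 1).factorial : ℝ)⁻¹ *
            (d ^ (j + 1) * ((j + 1).factorial * ‖h z‖ * γz ^ (j + 1))) := by gcongr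
      _ = ‖h z‖ * u * u ^ j := by
          field_simp [hudef, mul_pow]
          ring
  have := norm_sub_norm_le (h z) (h w)
  rw [norm_sub_rev] at this
  linarith

theorem stmt0 (h : ℂ → ℂ) (z w : ℂ) (hdiff : Differentiable ℂ h) (hz : h z ≠ 0)
    (γz γw : ℝ) (hγz : IsLUB (gammaSet h z) γz) (hγw : IsLUB (gammaSet h w) γw)
    (hcond : 4 * ‖z - w‖ * γz ≤ 1) : γw ≤ 4 * γz := by
  have hhz : (0 : ℝ) < ‖h z‖ := norm_pos_iff.mpr hz
  set d : ℝ := ‖z - w‖ with hd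
  have hd0 : 0 ≤ d := norm_nonneg _
  -- γz is nonnegative
  have hmem1 : ‖iteratedDeriv 1 h z / (((1 : ℕ).factorial : ℂ) * h z)‖ ^ ((1 : ℝ) / (1 : ℕ)) ∈
      gammaSet h z := ⟨1, le_refl 1, rfl⟩
  have hγ0 : 0 ≤ γz := le_trans (Real.rpow_nonneg (norm_nonneg _) _) (hγz.1 hmem1)
  set u : ℝ := d * γz with hudef
  have hu0 : 0 ≤ u := mul_nonneg hd0 hγ0
  have hu14 : u ≤ 1 / 4 := by rw [hudef]; nlinarith [hcond]
  have hu1 : u < 1 := lt_of_le_of_lt hu14 (by norm_num)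
  -- coefficient bound at z
  have hcoef : ∀ n : ℕ, ‖iteratedDeriv n h z‖ ≤ n.factorial * ‖h z‖ * γz ^ n := by
    intro n
    rcases Nat.eq_zero_or_pos n with h0 | hpos
    · subst h0; simp
    · have hmem : ‖iteratedDeriv n h z / ((n.factorial : ℂ) * h z)‖ ^ ((1 : ℝ) / n) ∈
          gammaSet h z := ⟨n, hpos, rfl⟩
      have hub := hγz.1 hmem
      set x : ℝ := ‖iteratedDeriv n h z / ((n.factorial : ℂ) * h z)‖ with hxdef
      have hx0 : 0 ≤ x := norm_nonneg _
      have hn0 : ((n : ℝ)) ≠ 0 := by exact_mod_cast hpos.ne'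
      have hxn : x ≤ γz ^ n := by
        have h3 := Real.rpow_le_rpow (Real.rpow_nonneg hx0 _) hub
          (by positivity : (0 : ℝ) ≤ (n : ℝ))
        rwa [← Real.rpow_mul hx0, one_div, inv_mul_cancel₀ hn0, Real.rpow_one,
          Real.rpow_natCast] at h3
      have hnf : (0 : ℝ) < (n.factorial : ℝ) := by exact_mod_cast n.factorial_pos
      have hxval : ‖iteratedDeriv n h z‖ = x * ((n.factorial : ℝ) * ‖h z‖) := by
        rw [hxdef, norm_div, norm_mul, Complex.norm_natCast]
        exact (div_mul_cancel₀ _ (mul_pos hnf hhz).ne').symm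
      rw [hxval]
      calc x * ((n.factorial : ℝ) * ‖h z‖) ≤ γz ^ n * ((n.factorial : ℝ) * ‖h z‖) := by
            gcongr
        _ = n.factorial * ‖h z‖ * γz ^ n := by ring
  have hupper := gamma_deriv_bound h z w hdiff hγ0 hcoef hu1
  have hlower := gamma_hw_lower h z w hdiff hγ0 hcoef hu1
  rw [← hudef] at hupper hlower
  -- lower bound on ‖h w‖
  have h1u : (0 : ℝ) < 1 - u := by linarith
  have hfrac : u * (1 - u)⁻¹ ≤ 1 / 3 := by
    rw [← div_eq_mul_inv, div_le_div_iff₀ h1u (by norm_num)]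
    linarith
  have hhw : (2 / 3 : ℝ) * ‖h z‖ ≤ ‖h w‖ := by
    have : ‖h z‖ * u * (1 - u)⁻¹ ≤ ‖h z‖ * (1 / 3) := by
      rw [mul_assoc]
      exact mul_le_mul_of_nonneg_left hfrac hhz.le
    linarith
  have hhw0 : (0 : ℝ) < ‖h w‖ := lt_of_lt_of_le (by positivity) hhw
  -- conclude via the least upper bound property at w
  apply hγw.2
  rintro x ⟨k, hk, rfl⟩
  have hk0 : ((k : ℝ)) ≠ 0 := by
    exact_mod_cast (Nat.pos_of_ne_zero (by omega)).ne'
  have hkf : (0 : ℝ) < (k.factorial : ℝ) := by exact_mod_cast k.factorial_pos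
  have h43 : 1 / (1 - u) ^ (k + 1) ≤ (4 / 3 : ℝ) ^ (k + 1) := by
    rw [div_le_iff₀ (by positivity)]
    have h34 : ((3 / 4 : ℝ)) ^ (k + 1) ≤ (1 - u) ^ (k + 1) := by
      apply pow_le_pow_left₀ (by norm_num)
      linarith
    calc (1 : ℝ) = (4 / 3 : ℝ) ^ (k + 1) * (3 / 4 : ℝ) ^ (k + 1) := by
          rw [← mul_pow] <;> norm_num
      _ ≤ (4 / 3 : ℝ) ^ (k + 1) * (1 - u) ^ (k + 1) := by gcongr
  have hb : ‖iteratedDeriv k h w / ((k.factorial : ℂ) * h w)‖ ≤ (4 * γz) ^ k := by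
    rw [norm_div, norm_mul, Complex.norm_natCast]
    rw [div_le_iff₀ (by positivity)]
    have hchain : ‖iteratedDeriv k h w‖ ≤
        (4 / 3 : ℝ) ^ (k + 1) * ((k.factorial : ℝ) * ‖h z‖ * γz ^ k) := by
      refine le_trans (hupper k) ?_
      gcongr <;> positivity
    refine le_trans hchain ?_
    have h2le : (2 : ℝ) ≤ 3 ^ k := by
      calc (2 : ℝ) ≤ 3 ^ 1 := by norm_num
        _ ≤ 3 ^ k := pow_le_pow_right₀ (by norm_num) hk
    have hkey : (4 / 3 : ℝ) ^ (k + 1) * ‖h z‖ ≤ (3 : ℝ) ^ k * (4 / 3 : ℝ) ^ k *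
        ((2 / 3) * ‖h z‖) := by
      rw [pow_succ]
      nlinarith [pow_nonneg (by norm_num : (0:ℝ) ≤ (4/3:ℝ)) k, hhz.le, h2le,
        mul_pos (pow_pos (by norm_num : (0:ℝ) < (4/3:ℝ)) k) hhz]
    calc (4 / 3 : ℝ) ^ (k + 1) * ((k.factorial : ℝ) * ‖h z‖ * γz ^ k)
        = ((4 / 3 : ℝ) ^ (k + 1) * ‖h z‖) * ((k.factorial : ℝ) * γz ^ k) := by ring
      _ ≤ ((3 : ℝ) ^ k * (4 / 3 : ℝ) ^ k * ((2 / 3) * ‖h z‖)) *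
            ((k.factorial : ℝ) * γz ^ k) := by
          apply mul_le_mul_of_nonneg_right hkey
          positivity
      _ = (4 * γz) ^ k * ((k.factorial : ℝ) * ((2 / 3) * ‖h z‖)) := by
          rw [mul_pow 4 γz, show (4:ℝ) = 3 * (4/3) by norm_num, mul_pow 3 (4/3:ℝ)] <;> ring
      _ ≤ (4 * γz) ^ k * ((k.factorial : ℝ) * ‖h w‖) := by
          gcongr <;> positivity
  calc ‖iteratedDeriv k h w / ((k.factorial : ℂ) * h w)‖ ^ ((1 : ℝ) / k)
      ≤ ((4 * γz) ^ k) ^ ((1 : ℝ) / k) :=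
        Real.rpow_le_rpow (norm_nonneg _) hb (by positivity)
    _ = 4 * γz := by
        rw [← Real.rpow_natCast (4 * γz) k, ← Real.rpow_mul (by positivity),
          mul_one_div, div_self hk0, Real.rpow_one]
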